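/- Let b, m, γ > 0 and T > 0, and let φ : [0,T] → [0,∞) be absolutely continuous with φ(0) = 0 and φ'(t) ≤ −b φ(t)^m + γ^m for almost every t ∈ (0,T). Then φ(t) ≤ (2/b)^{1/m} γ for all t ∈ [0,T]. -/

import Mathlib

open MeasureTheory Filter Set

/-- ODE-type bound for an absolutely continuous function. -/
theorem stmt_16
    (b m γ T : ℝ) (hb : 0 < b) (hm : 0 < m) (hγ : 0 < γ) (hT : 0 < T)
    (φ dφ : ℝ → ℝ)
    (hφ0 : φ 0 = 0)
    (hφnonneg : ∀ t ∈ Set.Icc 0 T, 0 ≤ φ t)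
    -- absolute continuity: a.e. differentiability, integrable derivative, FTC
    (hφderiv : ∀ᵐ t ∂(volume.restrict (Set.Icc 0 T)), HasDerivAt φ (dφ t) t)
    (hφint : IntegrableOn dφ (Set.Icc 0 T))
    (hφftc : ∀ s t : ℝ, 0 ≤ s → s ≤ t → t ≤ T → φ t = φ s + ∫ r in s..t, dφ r)
    -- the differential inequality a.e. on (0, T)
    (hineq : ∀ᵐ t ∂(volume.restrict (Set.Ioo 0 T)), dφ t ≤ -b * φ t ^ m + γ ^ m) :
    ∀ t ∈ Set.Icc 0 T, φ t ≤ (2 / b) ^ (1 / m) * γ := by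
  set M : ℝ := (2 / b) ^ (1 / m) * γ with hMdef
  have h2b : (0:ℝ) < 2 / b := by positivity
  have hM0 : 0 < M := by positivity
  have hMm : M ^ m = (2 / b) * γ ^ m := by
    rw [hMdef, Real.mul_rpow (by positivity) hγ.le]
    rw [← Real.rpow_mul h2b.le, one_div_mul_cancel hm.ne', Real.rpow_one]
  -- continuity of φ on [0, T]
  have hcont : ContinuousOn φ (Set.Icc 0 T) := by
    have h1 : ContinuousOn (fun x => φ 0 + ∫ r in Set.Ioc 0 x, dφ r) (Set.Icc 0 T) :=
      (continuousOn_const.add (intervalIntegral.continuousOn_primitive hφint))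
    apply h1.congr
    intro x hx
    rw [hφftc 0 x le_rfl hx.1 hx.2, intervalIntegral.integral_of_le hx.1]
  by_contra hcon
  push_neg at hcon
  obtain ⟨t, ht, htM⟩ := hcon
  set S : Set ℝ := {r | r ∈ Set.Icc 0 t ∧ φ r ≤ M} with hSdef
  have h0S : (0:ℝ) ∈ S := ⟨⟨le_rfl, ht.1⟩, by rw [hφ0]; exact hM0.le⟩
  have hSne : S.Nonempty := ⟨0, h0S⟩
  have hSbdd : BddAbove S := ⟨t, fun r hr => hr.1.2⟩
  set s : ℝ := sSup S with hsdef
  have hSclosed : IsClosed S := by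
    have : S = Set.Icc 0 t ∩ φ ⁻¹' Set.Iic M := rfl
    rw [this]
    exact ContinuousOn.preimage_isClosed_of_isClosed
      (hcont.mono (Set.Icc_subset_Icc le_rfl ht.2)) isClosed_Icc isClosed_Iic
  have hsS : s ∈ S := hSclosed.csSup_mem hSne hSbdd
  have hs0 : 0 ≤ s := hsS.1.1
  have hst : s < t := lt_of_le_of_ne hsS.1.2 (fun h => absurd (h ▸ hsS.2) (not_le.mpr htM))
  have hgt : ∀ r ∈ Set.Ioo s t, M < φ r := by
    intro r hr
    by_contra hle
    push_neg at hle
    have : r ∈ S := ⟨⟨hs0.trans hr.1.le, hr.2.le⟩, hle⟩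
    exact absurd (le_csSup hSbdd this) (not_le.mpr hr.1)
  -- a.e. bound on the derivative on [s, t]
  have h1 : ∀ᵐ r ∂volume, r ∈ Set.Ioo 0 T → dφ r ≤ -b * φ r ^ m + γ ^ m :=
    (ae_restrict_iff' measurableSet_Ioo).mp hineq
  have h2 : ∀ᵐ r : ℝ ∂volume, r ∉ ({s, t} : Set ℝ) := by
    refine measure_eq_zero_iff_ae_notMem.mp ?_
    exact Set.Finite.measure_zero (Set.toFinite _) _
  have hae : ∀ᵐ r ∂(volume.restrict (Set.Icc s t)), dφ r ≤ -γ ^ m := by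
    rw [ae_restrict_iff' measurableSet_Icc]
    filter_upwards [h1, h2] with r hr1 hr2 hr
    have hrIoo : r ∈ Set.Ioo s t := by
      constructor
      · exact lt_of_le_of_ne hr.1 (fun h => hr2 (by simp [← h]))
      · exact lt_of_le_of_ne hr.2 (fun h => hr2 (by simp [h]))
    have hrT : r ∈ Set.Ioo 0 T := ⟨lt_of_le_of_lt hs0 hrIoo.1, lt_of_lt_of_le hrIoo.2 ht.2⟩
    have hφr : M < φ r := hgt r hrIoo
    have hpow : M ^ m ≤ φ r ^ m := Real.rpow_le_rpow hM0.le hφr.le hm.le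
    calc dφ r ≤ -b * φ r ^ m + γ ^ m := hr1 hrT
      _ ≤ -b * M ^ m + γ ^ m := by nlinarith
      _ = -γ ^ m := by rw [hMm]; field_simp; ring
  have hint : IntervalIntegrable dφ volume s t := by
    rw [intervalIntegrable_iff_integrableOn_Icc_of_le hst.le]
    exact hφint.mono_set (Set.Icc_subset_Icc hs0 ht.2)
  have hint' : IntervalIntegrable (fun _ : ℝ => -γ ^ m) volume s t :=
    intervalIntegrable_const
  have key : ∫ r in s..t, dφ r ≤ ∫ _ in s..t, (-γ ^ m) :=
    intervalIntegral.integral_mono_ae_restrict hst.le hint hint' hae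
  rw [intervalIntegral.integral_const, smul_eq_mul] at key
  have := hφftc s t hs0 hst.le ht.2
  have hγm : 0 < γ ^ m := Real.rpow_pos_of_pos hγ m
  nlinarith [hsS.2]
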